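/- The fiber product ring (K[x,y,z]/(z²−1)) ×_{K[x,y,z]/(z²−1,y)} K[t], where the first map is the quotient by y and the second sends t to the class of x, is isomorphic as a K-algebra to K[u,v,w]/(uv), via u ↦ (y(z−1), 0), v ↦ (y(z+1), 0), w ↦ (x, t). -/

import Mathlib

/-- The ideal `(z² − 1) ⊂ K[x,y,z]` (variables `X 0 = x`, `X 1 = y`, `X 2 = z`). -/
noncomputable def I4 (K : Type*) [Field K] : Ideal (MvPolynomial (Fin 3) K) :=
  Ideal.span {MvPolynomial.X 2 ^ 2 - 1}

/-- The ideal `(z² − 1, y) ⊂ K[x,y,z]`. -/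
noncomputable def J4 (K : Type*) [Field K] : Ideal (MvPolynomial (Fin 3) K) :=
  Ideal.span {MvPolynomial.X 2 ^ 2 - 1, MvPolynomial.X 1}

/-- `Ā = K[x,y,z]/(z² − 1)`. -/
abbrev Abar4 (K : Type*) [Field K] := MvPolynomial (Fin 3) K ⧸ I4 K

/-- The `K`-algebra map `K[u,v,w] → Ā × K[t]`, `u ↦ (y(z−1), 0)`, `v ↦ (y(z+1), 0)`,
`w ↦ (x, t)`. -/
noncomputable def phi4 (K : Type*) [Field K] :
    MvPolynomial (Fin 3) K →ₐ[K] Abar4 K × Polynomial K :=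
  MvPolynomial.aeval
    ![(Ideal.Quotient.mk (I4 K) (MvPolynomial.X 1 * (MvPolynomial.X 2 - 1)), 0),
      (Ideal.Quotient.mk (I4 K) (MvPolynomial.X 1 * (MvPolynomial.X 2 + 1)), 0),
      (Ideal.Quotient.mk (I4 K) (MvPolynomial.X 0), Polynomial.X)]

namespace Stmt4Aux
open MvPolynomial

variable (K : Type*) [Field K]

/-- The substitution `u ↦ y(z-1)`, `v ↦ y(z+1)`, `w ↦ x`. -/
noncomputable def A : MvPolynomial (Fin 3) K →ₐ[K] MvPolynomial (Fin 3) K :=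
  aeval ![X 1 * (X 2 - 1), X 1 * (X 2 + 1), X 0]

/-- The substitution `u ↦ 0`, `v ↦ 0`, `w ↦ t`. -/
noncomputable def G0 : MvPolynomial (Fin 3) K →ₐ[K] Polynomial K :=
  aeval ![0, 0, Polynomial.X]

lemma fst_phi4 (p : MvPolynomial (Fin 3) K) :
    (phi4 K p).1 = Ideal.Quotient.mk (I4 K) (A K p) := by
  have h : (AlgHom.fst K (Abar4 K) (Polynomial K)).comp (phi4 K) =
      (Ideal.Quotient.mkₐ K (I4 K)).comp (A K) := by
    apply MvPolynomial.algHom_ext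
    intro j
    fin_cases j <;> simp [phi4, A]
  exact congrFun (congrArg (fun f => f.toFun) h) p

lemma snd_phi4 (p : MvPolynomial (Fin 3) K) :
    (phi4 K p).2 = G0 K p := by
  have h : (AlgHom.snd K (Abar4 K) (Polynomial K)).comp (phi4 K) = G0 K := by
    apply MvPolynomial.algHom_ext
    intro j
    fin_cases j <;> simp [phi4, G0]
  exact congrFun (congrArg (fun f => f.toFun) h) p

lemma mk_eq_of (a b c : MvPolynomial (Fin 3) K) (h : a - b = c * (X 2 ^ 2 - 1)) :
    Ideal.Quotient.mk (I4 K) a = Ideal.Quotient.mk (I4 K) b := by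
  rw [Ideal.Quotient.eq, I4]
  exact Ideal.mem_span_singleton'.mpr ⟨c, h.symm⟩

end Stmt4Aux

namespace Stmt4Aux
open MvPolynomial
variable {K : Type*} [Field K]

lemma sub_aeval_update_mem (i : Fin 3) (p : MvPolynomial (Fin 3) K) :
    p - MvPolynomial.aeval (Function.update MvPolynomial.X i 0) p ∈
      Ideal.span {(MvPolynomial.X i : MvPolynomial (Fin 3) K)} := by
  induction p using MvPolynomial.induction_on with
  | C c => simp
  | add p q hp hq =>
      have := Ideal.add_mem _ hp hq
      convert this using 1
      simp [map_add]; ring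
  | mul_X p n hp =>
      rw [map_mul, aeval_X]
      by_cases hn : n = i
      · subst hn
        rw [Function.update_self]
        simpa using Ideal.mul_mem_left _ p (Ideal.subset_span (Set.mem_singleton _))
      · rw [Function.update_of_ne hn]
        have : p * X n - aeval (Function.update X i 0) p * X n
            = (p - aeval (Function.update X i 0) p) * X n := by ring
        rw [this]
        exact Ideal.mul_mem_right _ _ hp

lemma X_dvd_of_update (i : Fin 3) (p : MvPolynomial (Fin 3) K)
    (h : MvPolynomial.aeval (Function.update MvPolynomial.X i 0 :
      Fin 3 → MvPolynomial (Fin 3) K) p = 0) :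
    (MvPolynomial.X i : MvPolynomial (Fin 3) K) ∣ p := by
  have := sub_aeval_update_mem i p
  rw [h, sub_zero, Ideal.mem_span_singleton] at this
  exact this

lemma update0_eq_zero (h2 : (2:K) ≠ 0) (p : MvPolynomial (Fin 3) K)
    (h : Ideal.Quotient.mk (I4 K) (A K p) = 0) :
    MvPolynomial.aeval (Function.update MvPolynomial.X 0 0 :
      Fin 3 → MvPolynomial (Fin 3) K) p = 0 := by
  rw [Ideal.Quotient.eq_zero_iff_mem, I4, Ideal.mem_span_singleton'] at h
  obtain ⟨c, hc⟩ := h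
  set E1 : MvPolynomial (Fin 3) K →ₐ[K] MvPolynomial (Fin 2) K := aeval ![X 0, X 1, 1] with hE1
  have h1 : E1 (A K p) = 0 := by
    rw [← hc, map_mul]
    have : E1 (X 2 ^ 2 - 1) = 0 := by simp [hE1]
    rw [this, mul_zero]
  set β : MvPolynomial (Fin 2) K →ₐ[K] MvPolynomial (Fin 3) K :=
    aeval ![X 2, C (2⁻¹:K) * X 1] with hβ
  have hcomp : β.comp (E1.comp (A K)) =
      aeval (Function.update X 0 0 : Fin 3 → MvPolynomial (Fin 3) K) := by
    apply MvPolynomial.algHom_ext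
    have h2' : (C (2:K) : MvPolynomial (Fin 3) K) = 2 := map_ofNat C 2
    have hc2 : (C (2⁻¹:K) : MvPolynomial (Fin 3) K) * C (2:K) = 1 := by
      rw [← map_mul, inv_mul_cancel₀ h2, map_one]
    rw [h2'] at hc2
    intro j
    fin_cases j <;> simp [hβ, hE1, A, Function.update] <;> linear_combination X 1 * hc2
  have := congrArg β h1
  rw [map_zero] at this
  calc aeval (Function.update X 0 0 : Fin 3 → MvPolynomial (Fin 3) K) p
      = β (E1 (A K p)) := by rw [← hcomp]; rfl
  _ = 0 := this

lemma update1_eq_zero (h2 : (2:K) ≠ 0) (p : MvPolynomial (Fin 3) K)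
    (h : Ideal.Quotient.mk (I4 K) (A K p) = 0) :
    MvPolynomial.aeval (Function.update MvPolynomial.X 1 0 :
      Fin 3 → MvPolynomial (Fin 3) K) p = 0 := by
  rw [Ideal.Quotient.eq_zero_iff_mem, I4, Ideal.mem_span_singleton'] at h
  obtain ⟨c, hc⟩ := h
  set E1 : MvPolynomial (Fin 3) K →ₐ[K] MvPolynomial (Fin 2) K := aeval ![X 0, X 1, -1] with hE1
  have h1 : E1 (A K p) = 0 := by
    rw [← hc, map_mul]
    have : E1 (X 2 ^ 2 - 1) = 0 := by simp [hE1]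
    rw [this, mul_zero]
  set β : MvPolynomial (Fin 2) K →ₐ[K] MvPolynomial (Fin 3) K :=
    aeval ![X 2, -(C (2⁻¹:K) * X 0)] with hβ
  have hcomp : β.comp (E1.comp (A K)) =
      aeval (Function.update X 1 0 : Fin 3 → MvPolynomial (Fin 3) K) := by
    apply MvPolynomial.algHom_ext
    have h2' : (C (2:K) : MvPolynomial (Fin 3) K) = 2 := map_ofNat C 2
    have hc2 : (C (2⁻¹:K) : MvPolynomial (Fin 3) K) * C (2:K) = 1 := by
      rw [← map_mul, inv_mul_cancel₀ h2, map_one]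
    rw [h2'] at hc2
    intro j
    fin_cases j <;> simp [hβ, hE1, A, Function.update] <;> linear_combination X 0 * hc2
  have := congrArg β h1
  rw [map_zero] at this
  calc aeval (Function.update X 1 0 : Fin 3 → MvPolynomial (Fin 3) K) p
      = β (E1 (A K p)) := by rw [← hcomp]; rfl
  _ = 0 := this

lemma ker_phi4 (h2 : (2:K) ≠ 0) :
    RingHom.ker (phi4 K) =
      Ideal.span {(MvPolynomial.X 0 * MvPolynomial.X 1 : MvPolynomial (Fin 3) K)} := by
  apply le_antisymm
  · intro p hp
    rw [RingHom.mem_ker] at hp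
    have h1 : Ideal.Quotient.mk (I4 K) (A K p) = 0 := by
      rw [← fst_phi4, hp]; rfl
    have hu := update0_eq_zero h2 p h1
    obtain ⟨q, rfl⟩ := X_dvd_of_update 0 p hu
    have hv := update1_eq_zero h2 _ h1
    rw [map_mul] at hv
    have hx0 : MvPolynomial.aeval (Function.update MvPolynomial.X 1 0 :
        Fin 3 → MvPolynomial (Fin 3) K) (X 0 : MvPolynomial (Fin 3) K) = X 0 := by
      simp [Function.update]
    rw [hx0] at hv
    have hq : MvPolynomial.aeval (Function.update MvPolynomial.X 1 0 :
        Fin 3 → MvPolynomial (Fin 3) K) q = 0 := by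
      rcases mul_eq_zero.mp hv with h | h
      · exact absurd h (MvPolynomial.X_ne_zero 0)
      · exact h
    obtain ⟨r, rfl⟩ := X_dvd_of_update 1 q hq
    rw [Ideal.mem_span_singleton]
    exact ⟨r, by ring⟩
  · rw [Ideal.span_le, Set.singleton_subset_iff, SetLike.mem_coe, RingHom.mem_ker]
    apply Prod.ext
    · rw [fst_phi4, Prod.fst_zero, Ideal.Quotient.eq_zero_iff_mem, I4, Ideal.mem_span_singleton']
      refine ⟨X 1 ^ 2, ?_⟩
      show _ = A K (X 0 * X 1)
      rw [map_mul, A, aeval_X, aeval_X]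
      simp only [Matrix.cons_val_zero, Matrix.cons_val_one, Matrix.head_cons]
      ring
    · rw [snd_phi4, Prod.snd_zero, G0, map_mul, aeval_X, aeval_X]
      simp

end Stmt4Aux

namespace Stmt4Aux
open MvPolynomial
variable {K : Type*} [Field K]

lemma A_X0 : A K (X 0) = X 1 * (X 2 - 1) := by simp [A]
lemma A_X1 : A K (X 1) = X 1 * (X 2 + 1) := by simp [A]
lemma A_X2 : A K (X 2) = X 0 := by simp [A]
lemma A_C (a : K) : A K (C a) = C a := by simp [A, algebraMap_eq]

lemma Cinv2 (h2 : (2:K) ≠ 0) : (C (2⁻¹:K) : MvPolynomial (Fin 3) K) * 2 = 1 := by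
  rw [← map_ofNat (C : K →+* MvPolynomial (Fin 3) K) 2, ← map_mul, inv_mul_cancel₀ h2, map_one]

lemma exists_d {a b : MvPolynomial (Fin 3) K}
    (h : Ideal.Quotient.mk (I4 K) a = Ideal.Quotient.mk (I4 K) b) :
    ∃ d, a = b + d * (X 2 ^ 2 - 1) := by
  rw [Ideal.Quotient.eq, I4, Ideal.mem_span_singleton'] at h
  obtain ⟨d, hdd⟩ := h
  exact ⟨d, by linear_combination -hdd⟩

lemma range_aux (h2 : (2:K) ≠ 0) (B : MvPolynomial (Fin 3) K) :
    (∃ q, Ideal.Quotient.mk (I4 K) (A K q) = Ideal.Quotient.mk (I4 K) (B * X 1) ∧ G0 K q = 0) ∧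
    (∃ q, Ideal.Quotient.mk (I4 K) (A K q) = Ideal.Quotient.mk (I4 K) (B * X 1 * X 2) ∧
      G0 K q = 0) := by
  have e2 := Cinv2 h2
  induction B using MvPolynomial.induction_on with
  | C c =>
      have hcc : (C (c * 2⁻¹) : MvPolynomial (Fin 3) K) * 2 = C c := by
        rw [C_mul, mul_assoc, e2, mul_one]
      constructor
      · refine ⟨C (c * 2⁻¹) * (X 1 - X 0), ?_, by simp [G0]⟩
        have ha : A K (C (c * 2⁻¹) * (X 1 - X 0)) =
            C (c * 2⁻¹) * (X 1 * (X 2 + 1) - X 1 * (X 2 - 1)) := by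
          simp only [map_mul, map_sub, A_X0, A_X1, A_C]
        rw [ha]
        exact mk_eq_of K _ _ 0 (by linear_combination X 1 * hcc)
      · refine ⟨C (c * 2⁻¹) * (X 0 + X 1), ?_, by simp [G0]⟩
        have ha : A K (C (c * 2⁻¹) * (X 0 + X 1)) =
            C (c * 2⁻¹) * (X 1 * (X 2 - 1) + X 1 * (X 2 + 1)) := by
          simp only [map_mul, map_add, A_X0, A_X1, A_C]
        rw [ha]
        exact mk_eq_of K _ _ 0 (by linear_combination (X 1 * X 2) * hcc)
  | add p q hp hq =>
      obtain ⟨⟨qp, hp1, hp2⟩, ⟨qp', hp1', hp2'⟩⟩ := hp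
      obtain ⟨⟨qq, hq1, hq2⟩, ⟨qq', hq1', hq2'⟩⟩ := hq
      obtain ⟨dp, hdp⟩ := exists_d hp1
      obtain ⟨dq, hdq⟩ := exists_d hq1
      obtain ⟨dp', hdp'⟩ := exists_d hp1'
      obtain ⟨dq', hdq'⟩ := exists_d hq1'
      constructor
      · refine ⟨qp + qq, ?_, by simp only [map_add, hp2, hq2, add_zero]⟩
        rw [map_add]
        exact mk_eq_of K _ _ (dp + dq) (by linear_combination hdp + hdq)
      · refine ⟨qp' + qq', ?_, by simp only [map_add, hp2', hq2', add_zero]⟩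
        rw [map_add]
        exact mk_eq_of K _ _ (dp' + dq') (by linear_combination hdp' + hdq')
  | mul_X B n hB =>
      obtain ⟨⟨q, hq1, hq2⟩, ⟨q', hq1', hq2'⟩⟩ := hB
      obtain ⟨d, hd⟩ := exists_d hq1
      obtain ⟨d', hd'⟩ := exists_d hq1'
      fin_cases n <;> simp only [Fin.zero_eta, Fin.mk_one, Fin.reduceFinMk, Fin.isValue]
      · constructor
        · refine ⟨q * X 2, ?_, by simp only [map_mul, hq2, zero_mul]⟩
          have ha : A K (q * X 2) = A K q * X 0 := by rw [map_mul, A_X2]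
          rw [ha]
          exact mk_eq_of K _ _ (d * X 0) (by linear_combination (X 0) * hd)
        · refine ⟨q' * X 2, ?_, by simp only [map_mul, hq2', zero_mul]⟩
          have ha : A K (q' * X 2) = A K q' * X 0 := by rw [map_mul, A_X2]
          rw [ha]
          exact mk_eq_of K _ _ (d' * X 0) (by linear_combination (X 0) * hd')
      · constructor
        · refine ⟨C (2⁻¹:K) * q * (X 1 - X 0), ?_,
            by simp only [map_mul, map_sub, hq2, mul_zero, zero_mul]⟩
          have ha : A K (C (2⁻¹:K) * q * (X 1 - X 0)) =
              C (2⁻¹:K) * A K q * (X 1 * (X 2 + 1) - X 1 * (X 2 - 1)) := by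
            simp only [map_mul, map_sub, A_X0, A_X1, A_C]
          rw [ha]
          refine mk_eq_of K _ _ (X 1 * d) ?_
          linear_combination (2 * C (2⁻¹:K) * X 1) * hd +
            (B * X 1 ^ 2 + X 1 * d * (X 2 ^ 2 - 1)) * e2
        · refine ⟨C (2⁻¹:K) * q * (X 0 + X 1), ?_,
            by simp only [map_mul, map_add, hq2, mul_zero, zero_mul]⟩
          have ha : A K (C (2⁻¹:K) * q * (X 0 + X 1)) =
              C (2⁻¹:K) * A K q * (X 1 * (X 2 - 1) + X 1 * (X 2 + 1)) := by
            simp only [map_mul, map_add, A_X0, A_X1, A_C]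
          rw [ha]
          refine mk_eq_of K _ _ (X 1 * X 2 * d) ?_
          linear_combination (2 * C (2⁻¹:K) * X 1 * X 2) * hd +
            (B * X 1 ^ 2 * X 2 + X 1 * X 2 * d * (X 2 ^ 2 - 1)) * e2
      · constructor
        · exact ⟨q', mk_eq_of K _ _ d' (by linear_combination hd'), hq2'⟩
        · exact ⟨q, mk_eq_of K _ _ (d - B * X 1) (by linear_combination hd), hq2⟩

end Stmt4Aux

namespace Stmt4Aux
open MvPolynomial
variable {K : Type*} [Field K]

lemma hle4 : I4 K ≤ J4 K :=
  Ideal.span_mono (Set.singleton_subset_iff.mpr (Set.mem_insert _ _))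

lemma X1_mem_J4 : (X 1 : MvPolynomial (Fin 3) K) ∈ J4 K :=
  Ideal.subset_span (Set.mem_insert_iff.mpr (Or.inr rfl))

lemma compat (p : MvPolynomial (Fin 3) K) :
    Ideal.Quotient.factor (S := I4 K) (T := J4 K) hle4 ((phi4 K p).1) =
      Polynomial.aeval (Ideal.Quotient.mk (J4 K) (MvPolynomial.X 0)) ((phi4 K p).2) := by
  rw [fst_phi4, snd_phi4, Ideal.Quotient.factor_mk]
  have h : (Ideal.Quotient.mkₐ K (J4 K)).comp (A K) =
      (Polynomial.aeval (Ideal.Quotient.mk (J4 K) (X 0))).comp (G0 K) := by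
    apply MvPolynomial.algHom_ext
    intro j
    fin_cases j <;> simp only [Fin.zero_eta, Fin.mk_one, Fin.reduceFinMk, Fin.isValue]
    · simp only [AlgHom.comp_apply, A_X0, Ideal.Quotient.mkₐ_eq_mk]
      rw [Ideal.Quotient.eq_zero_iff_mem.mpr (Ideal.mul_mem_right _ _ X1_mem_J4)]
      simp [G0]
    · simp only [AlgHom.comp_apply, A_X1, Ideal.Quotient.mkₐ_eq_mk]
      rw [Ideal.Quotient.eq_zero_iff_mem.mpr (Ideal.mul_mem_right _ _ X1_mem_J4)]
      simp [G0]
    · simp only [AlgHom.comp_apply, A_X2, Ideal.Quotient.mkₐ_eq_mk]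
      simp [G0]
  have := congrFun (congrArg (fun f => f.toFun) h) p
  simpa using this

end Stmt4Aux

/-- The fiber product `(K[x,y,z]/(z²−1)) ×_{K[x,y,z]/(z²−1,y)} K[t]` (where the first map
is the quotient by `y` and the second sends `t` to the class of `x`) is isomorphic as a
`K`-algebra to `K[u,v,w]/(uv)` via `u ↦ (y(z−1),0)`, `v ↦ (y(z+1),0)`, `w ↦ (x,t)`:
the map `phi4` has kernel `(uv)` and image exactly the fiber product. -/
theorem stmt_4 (K : Type*) [Field K] (h2 : (2 : K) ≠ 0) :
    RingHom.ker (phi4 K) = Ideal.span {MvPolynomial.X 0 * MvPolynomial.X 1} ∧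
    Set.range (phi4 K) =
      {fg : Abar4 K × Polynomial K |
        Ideal.Quotient.factor (S := I4 K) (T := J4 K)
            (Ideal.span_mono (Set.singleton_subset_iff.mpr (Set.mem_insert _ _))) fg.1 =
          Polynomial.aeval (Ideal.Quotient.mk (J4 K) (MvPolynomial.X 0)) fg.2} := by
  open MvPolynomial Stmt4Aux in
  refine ⟨ker_phi4 h2, ?_⟩
  ext fg
  simp only [Set.mem_range, Set.mem_setOf_eq]
  constructor
  · rintro ⟨p, rfl⟩
    exact compat p
  · obtain ⟨a, g⟩ := fg
    obtain ⟨f, rfl⟩ := Ideal.Quotient.mk_surjective a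
    intro h
    change Ideal.Quotient.factor hle4 (Ideal.Quotient.mk (I4 K) f) = Polynomial.aeval (Ideal.Quotient.mk (J4 K) (MvPolynomial.X 0)) g at h
    rw [Ideal.Quotient.factor_mk] at h
    have hG : Polynomial.aeval (Ideal.Quotient.mk (J4 K) (MvPolynomial.X 0)) g =
        Ideal.Quotient.mk (J4 K) (Polynomial.aeval (MvPolynomial.X 0 :
          MvPolynomial (Fin 3) K) g) := by
      have := Polynomial.aeval_algHom_apply (Ideal.Quotient.mkₐ K (J4 K))
        (MvPolynomial.X 0 : MvPolynomial (Fin 3) K) g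
      simpa using this
    have hmem : f - Polynomial.aeval (MvPolynomial.X 0 : MvPolynomial (Fin 3) K) g ∈ J4 K := by
      rw [← Ideal.Quotient.eq]
      rw [h, hG]
    rw [J4, Ideal.mem_span_pair] at hmem
    obtain ⟨a', b, hab⟩ := hmem
    obtain ⟨⟨q, hq1, hq2⟩, -⟩ := range_aux h2 b
    obtain ⟨d, hd⟩ := exists_d hq1
    refine ⟨q + Polynomial.aeval (MvPolynomial.X 2 : MvPolynomial (Fin 3) K) g, ?_⟩
    have hA2 : A K (Polynomial.aeval (MvPolynomial.X 2 : MvPolynomial (Fin 3) K) g) =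
        Polynomial.aeval (MvPolynomial.X 0 : MvPolynomial (Fin 3) K) g := by
      rw [← Polynomial.aeval_algHom_apply (A K), A_X2]
    have hG2 : G0 K (Polynomial.aeval (MvPolynomial.X 2 : MvPolynomial (Fin 3) K) g) = g := by
      rw [← Polynomial.aeval_algHom_apply (G0 K)]
      have : G0 K (MvPolynomial.X 2) = Polynomial.X := by simp [G0]
      rw [this, Polynomial.aeval_X_left_apply]
    apply Prod.ext
    · show (phi4 K _).1 = Ideal.Quotient.mk (I4 K) f
      rw [fst_phi4, map_add, hA2]
      exact mk_eq_of K _ _ (d - a') (by linear_combination hd + hab)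
    · show (phi4 K _).2 = g
      rw [snd_phi4, map_add, hq2, hG2, zero_add]
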